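/- The map sending an Aho–Corasick state to the S_π-state reached by reading it is an automaton morphism: for every non-final state A ∈ Q_AC of the Aho–Corasick automaton of π and every letter a ∈ 𝒜, the state of S_π reached by reading the word Aa from the initial state of S_π equals the state of S_π reached by reading the longest suffix of Aa that belongs to Q_AC (i.e., reading the Aho–Corasick transition target of (A,a)); moreover, if the Aho–Corasick transition target is its final state then reading Aa in S_π ends in the final state of S_π. -/

import Mathlib

set_option linter.unusedSectionVars false
set_option maxHeartbeats 1000000

variable {A : Type*}

/-- One transition of the subset seed automaton `S_π`: the state `none` is the final sink
state, a state `some (X, t)` is the non-final state `⟨X,t⟩`. -/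
def seedStep [DecidableEq A] (one : A) (π : ℕ → Finset A) (s : ℕ) :
    Option (Finset ℕ × ℕ) → A → Option (Finset ℕ × ℕ)
  | none, _ => none
  | some (X, t), a =>
    if a = one then
      if X.sup id + (t + 1) = s then none else some (X, t + 1)
    else
      let Y : Finset ℕ := ((Finset.Icc 1 (t + 1)).filter fun x => a ∈ π x) ∪
        ((X.filter fun x => x + t + 1 ≤ s ∧ a ∈ π (x + t + 1)).image fun x => x + t + 1)
      if Y.sup id = s then none else some (Y, 0)

/-- Reading a word from a state, applying transitions letter by letter. -/
def seedRead [DecidableEq A] (one : A) (π : ℕ → Finset A) (s : ℕ)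
    (q : Option (Finset ℕ × ℕ)) (w : List A) : Option (Finset ℕ × ℕ) :=
  w.foldl (seedStep one π s) q

/-- `π` matches the alignment `w` at the (1-based) position `p`. -/
def seedMatches (one : A) (π : ℕ → Finset A) (s : ℕ) (w : List A) (p : ℕ) : Prop :=
  1 ≤ p ∧ p + s ≤ w.length + 1 ∧
    ∀ i, 1 ≤ i → i ≤ s → w.getD (p + i - 2) one ∈ π i


/-- A word `C` is a state of the Aho–Corasick automaton of `π` (before merging final
states): `|C| ≤ s` and `C` is matched by the prefix `π_1⋯π_{|C|}`. -/
def acState (π : ℕ → Finset A) (s : ℕ) (C : List A) : Prop :=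
  C.length ≤ s ∧ ∀ i (h : i < C.length), C.get ⟨i, h⟩ ∈ π (i + 1)

section Helpers

variable [DecidableEq A] (one : A) (π : ℕ → Finset A) (s : ℕ)

/-- `w` matches the prefix of the seed of length `|w|`. -/
def okA (w : List A) : Prop := ∀ i < w.length, w.getD i one ∈ π (i + 1)

instance okA_dec (w : List A) : Decidable (okA one π w) := by
  unfold okA; exact Nat.decidableBallLT _ _

/-- The suffix of `w` of length `x` matches the prefix of the seed of length `x`. -/
def me (w : List A) (x : ℕ) : Prop := x ≤ w.length ∧ okA one π (w.drop (w.length - x))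

instance me_dec (w : List A) (x : ℕ) : Decidable (me one π w x) := by
  unfold me; infer_instance

def Mf (w : List A) : Finset ℕ := (Finset.Icc 1 s).filter (me one π w)

def tw (w : List A) : ℕ := (w.reverse.takeWhile (fun b => decide (b = one))).length

def uw (w : List A) : List A := (w.reverse.dropWhile (fun b => decide (b = one))).reverse

lemma mem_Mf {w : List A} {x : ℕ} :
    x ∈ Mf one π s w ↔ 1 ≤ x ∧ x ≤ s ∧ me one π w x := by
  simp [Mf, Finset.mem_filter, Finset.mem_Icc, and_assoc]

lemma okA_append (v z : List A) :
    okA one π (v ++ z) ↔ okA one π v ∧ ∀ i < z.length, z.getD i one ∈ π (v.length + i + 1) := by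
  constructor
  · intro h
    refine ⟨fun i hi => ?_, fun i hi => ?_⟩
    · have := h i (by simp; omega)
      rwa [List.getD_append _ _ _ _ hi] at this
    · have := h (v.length + i) (by simp; omega)
      rwa [List.getD_append_right _ _ _ _ (by omega), Nat.add_sub_cancel_left] at this
  · rintro ⟨h1, h2⟩ i hi
    simp only [List.length_append] at hi
    by_cases hv : i < v.length
    · rw [List.getD_append _ _ _ _ hv]; exact h1 i hv
    · rw [List.getD_append_right _ _ _ _ (by omega)]
      have := h2 (i - v.length) (by omega)
      convert this using 3
      omega

lemma okA_of_append {v z : List A} (h : okA one π (v ++ z)) : okA one π v :=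
  ((okA_append one π v z).1 h).1

lemma okA_replicate (hone : ∀ i, 1 ≤ i → i ≤ s → one ∈ π i) {t : ℕ} (ht : t ≤ s) :
    okA one π (List.replicate t one) := by
  intro i hi
  simp only [List.length_replicate] at hi
  rw [List.getD_eq_getElem _ _ (by simpa using hi), List.getElem_replicate]
  exact hone (i + 1) (by omega) (by omega)

lemma okA_append_replicate (hone : ∀ i, 1 ≤ i → i ≤ s → one ∈ π i) {v : List A} {t : ℕ}
    (hv : okA one π v) (ht : v.length + t ≤ s) : okA one π (v ++ List.replicate t one) := by
  rw [okA_append]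
  refine ⟨hv, fun i hi => ?_⟩
  simp only [List.length_replicate] at hi
  rw [List.getD_eq_getElem _ _ (by simpa using hi), List.getElem_replicate]
  exact hone _ (by omega) (by omega)

lemma me_le {w : List A} {x : ℕ} (h : me one π w x) : x ≤ w.length := h.1

lemma me_suffix {v w : List A} {x : ℕ} (hvw : v <:+ w) (h : me one π v x) : me one π w x := by
  obtain ⟨z, rfl⟩ := hvw
  obtain ⟨hx, hok⟩ := h
  refine ⟨by simp; omega, ?_⟩
  have : (z ++ v).length - x = z.length + (v.length - x) := by simp; omega
  rwa [this, List.drop_length_add_append]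

lemma me_suffix_rev {v w : List A} {x : ℕ} (hvw : v <:+ w) (hx : x ≤ v.length)
    (h : me one π w x) : me one π v x := by
  obtain ⟨z, rfl⟩ := hvw
  obtain ⟨_, hok⟩ := h
  refine ⟨hx, ?_⟩
  have : (z ++ v).length - x = z.length + (v.length - x) := by simp; omega
  rwa [this, List.drop_length_add_append] at hok

lemma me_append_singleton {p : List A} {a : A} {x : ℕ} (hx1 : 1 ≤ x) (hx : x ≤ p.length + 1) :
    me one π (p ++ [a]) x ↔ me one π p (x - 1) ∧ a ∈ π x := by
  have hdl : (p ++ [a]).length = p.length + 1 := by simp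
  have hle : p.length + 1 - x ≤ p.length := by omega
  have hdrop : (p ++ [a]).drop ((p ++ [a]).length - x) = p.drop (p.length - (x - 1)) ++ [a] := by
    rw [hdl, List.drop_append_of_le_length hle]
    congr 2
    omega
  have hlen : (p.drop (p.length - (x - 1))).length = x - 1 := by
    rw [List.length_drop]; omega
  unfold me
  rw [hdrop, okA_append, hdl, hlen]
  constructor
  · rintro ⟨h1, h2, h3⟩
    refine ⟨⟨by omega, h2⟩, ?_⟩
    have := h3 0 (by simp)
    simpa [show x - 1 + 0 + 1 = x by omega] using this
  · rintro ⟨⟨h1, h2⟩, h3⟩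
    refine ⟨by omega, h2, fun i hi => ?_⟩
    simp only [List.length_singleton] at hi
    interval_cases i
    simpa [show x - 1 + 0 + 1 = x by omega] using h3

lemma me_append_replicate (hone : ∀ i, 1 ≤ i → i ≤ s → one ∈ π i) {u : List A} {t x : ℕ}
    (hxs : x + t ≤ s) (h : me one π u x) :
    me one π (u ++ List.replicate t one) (x + t) := by
  obtain ⟨hx, hok⟩ := h
  refine ⟨by simp; omega, ?_⟩
  have : (u ++ List.replicate t one).length - (x + t) = u.length - x := by simp; omega
  rw [this, List.drop_append_of_le_length (by omega)]
  exact okA_append_replicate one π s hone hok (by rw [List.length_drop]; omega)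

lemma me_of_append_replicate {u : List A} {t y : ℕ}
    (ht : t < y) (h : me one π (u ++ List.replicate t one) y) : me one π u (y - t) := by
  obtain ⟨hy, hok⟩ := h
  simp only [List.length_append, List.length_replicate] at hy
  have h1 : (u ++ List.replicate t one).length - y = u.length - (y - t) := by simp; omega
  rw [h1, List.drop_append_of_le_length (by omega)] at hok
  exact ⟨by omega, okA_of_append one π hok⟩

lemma me_replicate_small (hone : ∀ i, 1 ≤ i → i ≤ s → one ∈ π i) {u : List A} {T y : ℕ}
    (hy : y ≤ T) (hys : y ≤ s) : me one π (u ++ List.replicate T one) y := by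
  refine ⟨by simp; omega, ?_⟩
  have h1 : (u ++ List.replicate T one).length - y = u.length + (T - y) := by simp; omega
  rw [h1, List.drop_length_add_append, List.drop_replicate]
  exact okA_replicate one π s hone (by omega)

lemma me_full {w : List A} (h : okA one π w) : me one π w w.length := by
  refine ⟨le_refl _, ?_⟩
  simpa using h

lemma okA_of_me_full {w : List A} (h : me one π w w.length) : okA one π w := by
  obtain ⟨_, hok⟩ := h
  simpa using hok

lemma uw_append_replicate (w : List A) : uw one w ++ List.replicate (tw one w) one = w := by
  have h1 : w.reverse.takeWhile (fun b => decide (b = one)) = List.replicate (tw one w) one := by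
    rw [List.eq_replicate_iff]
    exact ⟨rfl, fun b hb => by simpa using List.mem_takeWhile_imp hb⟩
  have h2 := congrArg List.reverse
    (List.takeWhile_append_dropWhile (p := fun b => decide (b = one)) (l := w.reverse))
  simpa [List.reverse_append, h1, uw, List.reverse_replicate] using h2

lemma uw_tw_length (w : List A) : (uw one w).length + tw one w = w.length := by
  have := congrArg List.length (uw_append_replicate one w)
  simpa using this

lemma replicate_tw_suffix (w : List A) : List.replicate (tw one w) one <:+ w :=
  ⟨uw one w, uw_append_replicate one w⟩

lemma le_tw_aux (k : ℕ) (r : List A) :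
    k ≤ ((List.replicate k one ++ r).takeWhile (fun b => decide (b = one))).length := by
  induction k with
  | zero => simp
  | succ n ih =>
    rw [List.replicate_succ, List.cons_append, List.takeWhile_cons]
    simpa using ih

lemma le_tw_of_replicate_suffix {k : ℕ} {w : List A}
    (h : List.replicate k one <:+ w) : k ≤ tw one w := by
  obtain ⟨z, hz⟩ := h
  have : w.reverse = List.replicate k one ++ z.reverse := by
    rw [← hz]; simp [List.reverse_append, List.reverse_replicate]
  unfold tw
  rw [this]
  exact le_tw_aux one k z.reverse

lemma tw_append_one (p : List A) : tw one (p ++ [one]) = tw one p + 1 := by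
  unfold tw
  simp [List.reverse_append, List.takeWhile_cons]

lemma uw_append_one (p : List A) : uw one (p ++ [one]) = uw one p := by
  unfold uw
  simp [List.reverse_append, List.dropWhile_cons]

lemma tw_append_ne {p : List A} {a : A} (ha : a ≠ one) : tw one (p ++ [a]) = 0 := by
  unfold tw
  simp [List.reverse_append, List.takeWhile_cons, ha]

lemma uw_append_ne {p : List A} {a : A} (ha : a ≠ one) : uw one (p ++ [a]) = p ++ [a] := by
  unfold uw
  simp [List.reverse_append, List.dropWhile_cons, ha]

lemma suffix_of_suffix_length_le {u v w : List A} (h1 : u <:+ w) (h2 : v <:+ w)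
    (h : u.length ≤ v.length) : u <:+ v := by
  rw [← List.reverse_prefix] at h1 h2 ⊢
  exact List.prefix_of_prefix_length_le h1 h2 (by simpa using h)

lemma seedRead_append (q : Option (Finset ℕ × ℕ)) (w : List A) (a : A) :
    seedRead one π s q (w ++ [a]) = seedStep one π s (seedRead one π s q w) a := by
  simp [seedRead, List.foldl_append]

lemma seedStep_some (X : Finset ℕ) (t : ℕ) (a : A) :
    seedStep one π s (some (X, t)) a =
      if a = one then
        if X.sup id + (t + 1) = s then none else some (X, t + 1)
      else
        if ((((Finset.Icc 1 (t + 1)).filter fun x => a ∈ π x) ∪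
            ((X.filter fun x => x + t + 1 ≤ s ∧ a ∈ π (x + t + 1)).image
              fun x => x + t + 1)).sup id) = s
        then none
        else some ((((Finset.Icc 1 (t + 1)).filter fun x => a ∈ π x) ∪
            ((X.filter fun x => x + t + 1 ≤ s ∧ a ∈ π (x + t + 1)).image
              fun x => x + t + 1)), 0) := rfl

lemma seedRead_eq (hs : 1 ≤ s) (hone : ∀ i, 1 ≤ i → i ≤ s → one ∈ π i) :
    ∀ w : List A, w.length ≤ s → (w.length = s → ¬ okA one π w) →
      seedRead one π s (some (∅, 0)) w = some (Mf one π s (uw one w), tw one w) := by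
  intro w
  induction w using List.reverseRecOn with
  | nil =>
    intro _ _
    have h1 : Mf one π s (uw one ([] : List A)) = ∅ := by
      ext x
      simp only [mem_Mf, Finset.notMem_empty, iff_false, not_and]
      intro hx1 _ hme
      have := me_le one π hme
      simp [uw] at this
      omega
    have h2 : Mf one π s ([] : List A) = ∅ := by
      rw [show ([] : List A) = uw one [] by simp [uw]]
      exact h1
    simp [seedRead, tw, uw, h1, h2]
  | append_singleton p a ih =>
    intro hw hnf
    have hplen : p.length + 1 ≤ s := by simpa using hw
    have IH := ih (by omega) (fun h => absurd h (by omega))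
    rw [seedRead_append, IH, seedStep_some]
    have hspec : uw one p ++ List.replicate (tw one p) one = p := uw_append_replicate one p
    have hut : (uw one p).length + tw one p = p.length := uw_tw_length one p
    set u := uw one p with hu
    set t := tw one p with htdef
    by_cases ha : a = one
    · rw [ha] at hnf ⊢
      rw [if_pos rfl]
      have hguard : ¬ ((Mf one π s u).sup id + (t + 1) = s) := by
        intro hg
        have hw' : p ++ [one] = u ++ List.replicate (t + 1) one := by
          rw [List.replicate_succ', ← List.append_assoc, hspec]
        have hmew : me one π (p ++ [one]) s := by
          rcases (Mf one π s u).eq_empty_or_nonempty with he | hne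
          · rw [he] at hg
            rw [Finset.sup_empty] at hg
            have hbz : (⊥ : ℕ) = 0 := rfl
            rw [hbz] at hg
            rw [hw']
            exact me_replicate_small one π s hone (by omega) (by omega)
          · obtain ⟨x, hx, hxs⟩ := Finset.exists_mem_eq_sup _ hne id
            rw [mem_Mf] at hx
            simp only [id] at hxs
            rw [hxs] at hg
            rw [hw', show s = x + (t + 1) by omega]
            exact me_append_replicate one π s hone (by omega) hx.2.2
        have hlenw : (p ++ [one]).length = s := by
          have := me_le one π hmew
          simp only [List.length_append, List.length_singleton] at this ⊢
          omega
        exact hnf hlenw (okA_of_me_full one π (by rw [hlenw]; exact hmew))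
      rw [if_neg hguard, tw_append_one, uw_append_one, ← hu, ← htdef]
    · rw [if_neg ha]
      have hwne : uw one (p ++ [a]) = p ++ [a] := uw_append_ne one ha
      have htne : tw one (p ++ [a]) = 0 := tw_append_ne one ha
      rw [hwne, htne]
      have hY : (((Finset.Icc 1 (t + 1)).filter fun x => a ∈ π x) ∪
            (((Mf one π s u).filter fun x => x + t + 1 ≤ s ∧ a ∈ π (x + t + 1)).image
              fun x => x + t + 1)) = Mf one π s (p ++ [a]) := by
        ext y
        simp only [Finset.mem_union, Finset.mem_filter, Finset.mem_Icc, Finset.mem_image,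
          mem_Mf]
        constructor
        · rintro (⟨⟨hy1, hy2⟩, hay⟩ | ⟨x, ⟨⟨hx1, hxs, hmex⟩, hxt, hax⟩, rfl⟩)
          · refine ⟨hy1, by omega, ?_⟩
            rw [me_append_singleton one π hy1 (by omega)]
            refine ⟨?_, hay⟩
            rw [← hspec]
            exact me_replicate_small one π s hone (by omega) (by omega)
          · have hxu := me_le one π hmex
            refine ⟨by omega, by omega, ?_⟩
            rw [me_append_singleton one π (by omega) (by omega)]
            constructor
            · rw [show x + t + 1 - 1 = x + t by omega, ← hspec]
              exact me_append_replicate one π s hone (by omega) hmex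
            · exact hax
        · rintro ⟨hy1, hys, hmey⟩
          have hyle : y ≤ p.length + 1 := by
            have := me_le one π hmey
            simpa using this
          rw [me_append_singleton one π hy1 hyle] at hmey
          obtain ⟨hmep, hay⟩ := hmey
          by_cases hyt : y ≤ t + 1
          · exact Or.inl ⟨⟨hy1, hyt⟩, hay⟩
          · rw [← hspec] at hmep
            have hmeu : me one π u (y - 1 - t) :=
              me_of_append_replicate one π (by omega) hmep
            refine Or.inr ⟨y - t - 1, ⟨⟨by omega, by omega, ?_⟩, by omega, ?_⟩, by omega⟩
            · rw [show y - t - 1 = y - 1 - t by omega]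
              exact hmeu
            · rw [show y - t - 1 + t + 1 = y by omega]
              exact hay
      rw [hY]
      have hguard : ¬ ((Mf one π s (p ++ [a])).sup id = s) := by
        intro hg
        rcases (Mf one π s (p ++ [a])).eq_empty_or_nonempty with he | hne
        · rw [he] at hg
          rw [Finset.sup_empty] at hg
          have hbz : (⊥ : ℕ) = 0 := rfl
          rw [hbz] at hg
          omega
        · obtain ⟨x, hx, hxs⟩ := Finset.exists_mem_eq_sup _ hne id
          simp only [id] at hxs
          rw [mem_Mf] at hx
          rw [hxs] at hg
          subst hg
          have hle := me_le one π hx.2.2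
          have hlenw : (p ++ [a]).length = x := by
            simp only [List.length_append, List.length_singleton] at hle ⊢
            omega
          exact hnf (by omega) (okA_of_me_full one π (by rw [hlenw]; exact hx.2.2))
      rw [if_neg hguard]

end Helpers


lemma acState_iff' [DecidableEq A] (one : A) (π : ℕ → Finset A) (s : ℕ) (D : List A) :
    acState π s D ↔ D.length ≤ s ∧ okA one π D := by
  unfold acState okA
  constructor <;> rintro ⟨h1, h2⟩ <;> refine ⟨h1, fun i hi => ?_⟩
  · rw [List.getD_eq_getElem _ _ hi]
    exact h2 i hi
  · have := h2 i hi
    rwa [List.getD_eq_getElem _ _ hi] at this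

theorem stmt_12 [DecidableEq A] (one : A) (π : ℕ → Finset A) (s : ℕ)
    (hs : 1 ≤ s) (hone : ∀ i, 1 ≤ i → i ≤ s → one ∈ π i)
    (B : List A) (hB : acState π s B) (hBnf : B.length < s) (a : A)
    (C : List A) (hC : acState π s C) (hCsuf : C <:+ B ++ [a])
    (hClongest : ∀ D : List A, acState π s D → D <:+ B ++ [a] → D.length ≤ C.length) :
    (C.length < s →
        seedRead one π s (some (∅, 0)) (B ++ [a]) = seedRead one π s (some (∅, 0)) C) ∧
      (C.length = s → seedRead one π s (some (∅, 0)) (B ++ [a]) = none)  := by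
  have haciff : ∀ D : List A, acState π s D ↔ D.length ≤ s ∧ okA one π D :=
    acState_iff' one π s
  have hwle : (B ++ [a]).length ≤ s := by simp; omega
  have hClen := hCsuf.length_le
  constructor
  · intro hCs
    set w := B ++ [a] with hwdef
    have hwnf : w.length = s → ¬ okA one π w := by
      intro hlen hok
      have hac : acState π s w := (haciff _).2 ⟨le_of_eq hlen, hok⟩
      have := hClongest _ hac (List.suffix_refl _)
      omega
    have h1 := seedRead_eq one π s hs hone w hwle hwnf
    have h2 := seedRead_eq one π s hs hone C (by omega) (fun h => absurd h (by omega))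
    rw [h1, h2]
    have hlw := uw_tw_length one w
    have hlC := uw_tw_length one C
    have htC : tw one w ≤ C.length := by
      have hD : acState π s (List.replicate (tw one w) one) := by
        rw [haciff]
        refine ⟨by simp; omega, okA_replicate one π s hone (by omega)⟩
      have := hClongest _ hD (replicate_tw_suffix one w)
      simpa using this
    have htwC : tw one C = tw one w := by
      apply le_antisymm
      · exact le_tw_of_replicate_suffix one ((replicate_tw_suffix one C).trans hCsuf)
      · apply le_tw_of_replicate_suffix one
        exact suffix_of_suffix_length_le (replicate_tw_suffix one w) hCsuf (by simpa using htC)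
    have hsufu : uw one C <:+ uw one w := by
      obtain ⟨z, hz⟩ := hCsuf
      have h2' : (z ++ uw one C) ++ List.replicate (tw one w) one =
          uw one w ++ List.replicate (tw one w) one := by
        rw [uw_append_replicate one w, List.append_assoc, ← htwC, uw_append_replicate one C]
        exact hz
      exact ⟨z, List.append_cancel_right h2'⟩
    have hMf : Mf one π s (uw one C) = Mf one π s (uw one w) := by
      ext y
      simp only [mem_Mf]
      constructor
      · rintro ⟨h1', h2', h3'⟩
        exact ⟨h1', h2', me_suffix one π hsufu h3'⟩
      · rintro ⟨h1', h2', h3'⟩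
        refine ⟨h1', h2', ?_⟩
        have hyw : y ≤ (uw one w).length := me_le one π h3'
        have hmew : me one π w (y + tw one w) := by
          have := me_append_replicate one π s hone
            (show y + tw one w ≤ s by omega) h3'
          rwa [uw_append_replicate one w] at this
        have hmewle := me_le one π hmew
        have hD : acState π s (w.drop (w.length - (y + tw one w))) := by
          rw [haciff]
          refine ⟨by rw [List.length_drop]; omega, hmew.2⟩
        have hlenD := hClongest _ hD (List.drop_suffix _ _)
        rw [List.length_drop] at hlenD
        have hyC : y ≤ (uw one C).length := by omega
        exact me_suffix_rev one π hsufu hyC h3'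
    rw [htwC, hMf]
  · intro hCs
    have hClen' : C.length ≤ B.length + 1 := by simpa using hClen
    have hCw : C = B ++ [a] := hCsuf.eq_of_length (by simp; omega)
    have hokw : okA one π (B ++ [a]) := by
      have := (haciff C).1 hC
      rw [hCw] at this
      exact this.2
    have hBlen : B.length = s - 1 := by
      have := congrArg List.length hCw
      simp at this
      omega
    have hrB := seedRead_eq one π s hs hone B (by omega) (fun h => absurd h (by omega))
    rw [seedRead_append, hrB, seedStep_some]
    have hspec : uw one B ++ List.replicate (tw one B) one = B := uw_append_replicate one B
    have hut : (uw one B).length + tw one B = B.length := uw_tw_length one B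
    set u := uw one B with hu
    set t := tw one B with ht
    have hoku : okA one π u := by
      have h' : okA one π (u ++ (List.replicate t one ++ [a])) := by
        rw [← List.append_assoc, hspec]
        exact hokw
      exact okA_of_append one π h'
    have has : a ∈ π s := by
      have h0 := hokw (s - 1) (by simp; omega)
      rw [List.getD_append_right _ _ _ _ (by omega)] at h0
      rw [show s - 1 - B.length = 0 by omega] at h0
      rw [show s - 1 + 1 = s by omega] at h0
      simpa using h0
    have hsuple : (Mf one π s u).sup id ≤ u.length := by
      apply Finset.sup_le
      intro x hx
      rw [mem_Mf] at hx
      exact me_le one π hx.2.2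
    by_cases ha : a = one
    · rw [ha]
      rw [if_pos rfl]
      have hcond : (Mf one π s u).sup id + (t + 1) = s := by
        rcases Nat.eq_zero_or_pos u.length with h0 | h0
        · omega
        · have hmem : u.length ∈ Mf one π s u := by
            rw [mem_Mf]
            exact ⟨h0, by omega, me_full one π hoku⟩
          have := Finset.le_sup (f := id) hmem
          simp only [id] at this
          omega
      rw [if_pos hcond]
    · rw [if_neg ha]
      have hsY : ((((Finset.Icc 1 (t + 1)).filter fun x => a ∈ π x) ∪
            (((Mf one π s u).filter fun x => x + t + 1 ≤ s ∧ a ∈ π (x + t + 1)).image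
              fun x => x + t + 1)).sup id) = s := by
        apply le_antisymm
        · apply Finset.sup_le
          intro y hy
          simp only [Finset.mem_union, Finset.mem_filter, Finset.mem_Icc, Finset.mem_image,
            mem_Mf] at hy
          rcases hy with ⟨⟨_, h2'⟩, _⟩ | ⟨x, ⟨_, hxle, _⟩, rfl⟩
          · simp only [id]; omega
          · simp only [id]; omega
        · have hmem : s ∈ (((Finset.Icc 1 (t + 1)).filter fun x => a ∈ π x) ∪
              (((Mf one π s u).filter fun x => x + t + 1 ≤ s ∧ a ∈ π (x + t + 1)).image
                fun x => x + t + 1)) := by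
            rcases Nat.eq_zero_or_pos u.length with h0 | h0
            · apply Finset.mem_union_left
              rw [Finset.mem_filter, Finset.mem_Icc]
              exact ⟨⟨hs, by omega⟩, has⟩
            · apply Finset.mem_union_right
              rw [Finset.mem_image]
              refine ⟨u.length, ?_, by omega⟩
              rw [Finset.mem_filter, mem_Mf]
              refine ⟨⟨h0, by omega, me_full one π hoku⟩, by omega, ?_⟩
              rw [show u.length + t + 1 = s by omega]
              exact has
          have := Finset.le_sup (f := id) hmem
          simpa using this
      rw [if_pos hsY]
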